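/- Let R be a domain over a field F with automorphism τ and τ-derivation δ satisfying τδ = γδτ, γ ≠ 0, and let T = R[x; τ, δ]. Suppose a ∈ R is a τ-eigenvector with τ(a) = βa and there exists a polynomial f(t) = c₀tᴺ + ⋯ + c_N over F, c₀ ≠ 0, c_N ≠ 0, with c₀xᴺa + c₁xᴺ⁻¹ax + ⋯ + c_N a xᴺ = 0. Then f(β) = 0 and δᴺ(a) = 0, where N = deg f. -/

import Mathlib

def oreD {F : Type*} [Field F] (β γ : F) : ℕ → ℕ → F
  | 0, 0 => 1
  | 0, _+1 => 0
  | k+1, 0 => oreD β γ k 0 * (γ ^ 0 * β)⁻¹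
  | k+1, j+1 => oreD β γ k (j+1) * (γ ^ (j+1) * β)⁻¹ - oreD β γ k j * (γ ^ j * β)⁻¹

lemma oreD_eq_zero {F : Type*} [Field F] (β γ : F) :
    ∀ k j, k < j → oreD β γ k j = 0 := by
  intro k
  induction k with
  | zero =>
    intro j hj
    match j, hj with
    | j+1, _ => rfl
  | succ k ih =>
    intro j hj
    match j, hj with
    | j+1, hj =>
      simp only [oreD]
      rw [ih _ (by omega), ih _ (by omega)]
      ring

lemma oreD_zero_right {F : Type*} [Field F] (β γ : F) :
    ∀ k, oreD β γ k 0 = β⁻¹ ^ k := by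
  intro k
  induction k with
  | zero => simp [oreD]
  | succ k ih => simp only [oreD, ih, pow_zero, one_mul, pow_succ]

lemma oreD_diag_ne_zero {F : Type*} [Field F] {β γ : F} (hβ : β ≠ 0) (hγ : γ ≠ 0) :
    ∀ k, oreD β γ k k ≠ 0 := by
  intro k
  induction k with
  | zero => simp [oreD]
  | succ k ih =>
    simp only [oreD]
    rw [oreD_eq_zero β γ k (k+1) (by omega), zero_mul, zero_sub, neg_ne_zero]
    exact mul_ne_zero ih (inv_ne_zero (mul_ne_zero (pow_ne_zero _ hγ) hβ))

/-- Proposition 2.4 (necessity direction).  Let `R` be a domain over `F` with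
automorphism `τ` and `τ`-derivation `δ`, `τδ = γ δτ`, `γ ≠ 0`, and let
`T = R[x; τ, δ]` be the Ore extension, modelled by an injective algebra map
`φ : R → T` and `x ∈ T` with `x φ(a) = φ(τ a) x + φ(δ a)`; the hypothesis `hbasis`
expresses the unique representation of elements of `T` as `Σ xⁱ rᵢ`.  If `a ≠ 0` is a
`τ`-eigenvector with `τ(a) = β a`, and the FA-relation
`c₀ x^N a + c₁ x^(N-1) a x + ⋯ + c_N a x^N = 0` holds with `c₀ ≠ 0`, `c_N ≠ 0`,
then `f(β) = Σ cᵢ β^(N-i) = 0` and `δ^N(a) = 0`. -/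
theorem ore_eigenvalue_root_and_nilpotent {F R T : Type*} [Field F] [Ring R] [IsDomain R]
    [Algebra F R] [Ring T] [Algebra F T]
    (τ : R ≃ₐ[F] R) (δ : Module.End F R)
    (hleib : ∀ a b : R, δ (a * b) = δ a * b + τ a * δ b)
    (γ : F) (hγ : γ ≠ 0) (hτδ : ∀ a : R, τ (δ a) = γ • δ (τ a))
    (φ : R →ₐ[F] T) (hφ : Function.Injective φ) (x : T)
    (hOre : ∀ a : R, x * φ a = φ (τ a) * x + φ (δ a))
    (hbasis : ∀ (m : ℕ) (r : ℕ → R),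
      ∑ i ∈ Finset.range m, x ^ i * φ (r i) = 0 → ∀ i < m, r i = 0)
    (a : R) (ha : a ≠ 0) (β : F) (hτa : τ a = β • a)
    (N : ℕ) (hN : 1 ≤ N) (c : ℕ → F) (hc0 : c 0 ≠ 0) (hcN : c N ≠ 0)
    (hrel : ∑ i ∈ Finset.range (N + 1), c i • (x ^ (N - i) * φ a * x ^ i) = 0) :
    (∑ i ∈ Finset.range (N + 1), c i * β ^ (N - i)) = 0 ∧ (δ ^ N) a = 0 := by
  haveI : NoZeroSMulDivisors F R :=
    inferInstance
  have hβ : β ≠ 0 := by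
    intro h
    apply ha
    apply τ.injective
    rw [hτa, h, zero_smul, map_zero]
  have hlam : ∀ j : ℕ, γ ^ j * β ≠ 0 := fun j =>
    mul_ne_zero (pow_ne_zero _ hγ) hβ
  -- each δ^j a is a τ-eigenvector
  have hδsucc : ∀ j : ℕ, (δ ^ (j+1)) a = δ ((δ ^ j) a) := by
    intro j; rw [pow_succ']; rfl
  have heig : ∀ j : ℕ, τ ((δ ^ j) a) = (γ ^ j * β) • ((δ ^ j) a) := by
    intro j
    induction j with
    | zero => simpa using hτa
    | succ j ih =>
      rw [hδsucc, hτδ, ih, map_smul, smul_smul]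
      congr 1
      rw [pow_succ]; ring
  -- commutation rule
  have hcomm : ∀ j : ℕ, φ ((δ ^ j) a) * x
      = (γ ^ j * β)⁻¹ • (x * φ ((δ ^ j) a)) - (γ ^ j * β)⁻¹ • φ ((δ ^ (j+1)) a) := by
    intro j
    have h1 : x * φ ((δ ^ j) a)
        = (γ ^ j * β) • (φ ((δ ^ j) a) * x) + φ ((δ ^ (j+1)) a) := by
      rw [hOre, heig, map_smul, smul_mul_assoc, hδsucc]
    rw [h1, smul_add, smul_smul, inv_mul_cancel₀ (hlam j), one_smul, add_sub_cancel_right]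
  -- main expansion
  have hexp : ∀ k : ℕ, φ a * x ^ k
      = ∑ j ∈ Finset.range (k+1), oreD β γ k j • (x ^ (k - j) * φ ((δ ^ j) a)) := by
    intro k
    induction k with
    | zero => simp [oreD]
    | succ k ih =>
      rw [pow_succ, ← mul_assoc, ih, Finset.sum_mul]
      have step : ∀ j ∈ Finset.range (k+1),
          (oreD β γ k j • (x ^ (k - j) * φ ((δ ^ j) a))) * x
            = (oreD β γ k j * (γ ^ j * β)⁻¹) • (x ^ (k+1-j) * φ ((δ ^ j) a))
              - (oreD β γ k j * (γ ^ j * β)⁻¹) • (x ^ (k - j) * φ ((δ ^ (j+1)) a)) := by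
        intro j hj
        have hjk : j ≤ k := Nat.lt_succ_iff.mp (Finset.mem_range.mp hj)
        rw [smul_mul_assoc, mul_assoc, hcomm j, mul_sub, smul_sub]
        congr 1
        · rw [mul_smul_comm, smul_smul, ← mul_assoc, ← pow_succ]
          have hx : k - j + 1 = k + 1 - j := by omega
          rw [hx]
        · rw [mul_smul_comm, smul_smul]
      rw [Finset.sum_congr rfl step, Finset.sum_sub_distrib]
      rw [Finset.sum_range_succ'
        (fun j => oreD β γ (k+1) j • (x ^ (k+1-j) * φ ((δ ^ j) a))) (k+1)]
      simp only [oreD, sub_smul, pow_zero, one_mul]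
      rw [Finset.sum_sub_distrib]
      rw [Finset.sum_range_succ'
        (fun j => (oreD β γ k j * (γ ^ j * β)⁻¹) • (x ^ (k+1-j) * φ ((δ ^ j) a))) k]
      rw [Finset.sum_range_succ
        (fun j => (oreD β γ k (j+1) * (γ ^ (j+1) * β)⁻¹) • (x ^ (k+1-(j+1)) * φ ((δ ^ (j+1)) a))) k]
      rw [oreD_eq_zero β γ k (k+1) (by omega), zero_mul, zero_smul, add_zero]
      simp only [pow_zero, one_mul, Nat.add_sub_cancel, Nat.sub_zero, Nat.succ_sub_succ]
      abel
  -- rewrite each term of the relation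
  have hterm : ∀ i ∈ Finset.range (N+1),
      c i • (x ^ (N - i) * φ a * x ^ i)
        = ∑ j ∈ Finset.range (N+1),
            (c i * oreD β γ i j) • (x ^ (N - j) * φ ((δ ^ j) a)) := by
    intro i hi
    have hiN : i ≤ N := Nat.lt_succ_iff.mp (Finset.mem_range.mp hi)
    rw [mul_assoc, hexp i, Finset.mul_sum, Finset.smul_sum]
    rw [Finset.sum_subset (Finset.range_subset_range.mpr (by omega : i + 1 ≤ N + 1))]
    · apply Finset.sum_congr rfl
      intro j hj
      by_cases hji : j ≤ i
      · rw [mul_smul_comm, smul_smul, ← mul_assoc, ← pow_add]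
        have hx : N - i + (i - j) = N - j := by omega
        rw [hx]
      · have : i < j := by omega
        simp [oreD_eq_zero β γ i j this]
    · intro j _ hj
      have : i < j := by simpa using hj
      simp [oreD_eq_zero β γ i j this]
  rw [Finset.sum_congr rfl hterm, Finset.sum_comm] at hrel
  have hsum : ∑ j ∈ Finset.range (N+1),
      (∑ i ∈ Finset.range (N+1), c i * oreD β γ i j) • (x ^ (N - j) * φ ((δ ^ j) a)) = 0 := by
    rw [← hrel]
    exact Finset.sum_congr rfl fun j _ => Finset.sum_smul
  -- convert to basis form
  set e : ℕ → F := fun j => ∑ i ∈ Finset.range (N+1), c i * oreD β γ i j with he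
  have hbasis' : ∀ m < N + 1, e (N - m) • (δ ^ (N - m)) a = 0 := by
    apply hbasis (N+1) (fun m => e (N - m) • (δ ^ (N - m)) a)
    have := Finset.sum_range_reflect
      (fun m => e (N - m) • (x ^ m * φ ((δ ^ (N - m)) a))) (N+1)
    simp only [Nat.add_sub_cancel] at this
    calc ∑ m ∈ Finset.range (N+1), x ^ m * φ (e (N - m) • (δ ^ (N - m)) a)
        = ∑ m ∈ Finset.range (N+1), e (N - m) • (x ^ m * φ ((δ ^ (N - m)) a)) := by
          apply Finset.sum_congr rfl
          intro m _
          rw [map_smul, mul_smul_comm]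
      _ = ∑ j ∈ Finset.range (N+1), e (N - (N - j)) • (x ^ (N - j) * φ ((δ ^ (N - (N - j))) a)) :=
          this.symm
      _ = 0 := by
          rw [← hsum]
          apply Finset.sum_congr rfl
          intro j hj
          have : N - (N - j) = j := by
            have := Nat.lt_succ_iff.mp (Finset.mem_range.mp hj); omega
          rw [this]
  constructor
  · -- leading coefficient: e 0 = 0
    have h0 : e 0 • a = 0 := by
      have := hbasis' N (by omega)
      simpa using this
    have he0 : e 0 = 0 := by
      rcases smul_eq_zero.mp h0 with h | h
      · exact h
      · exact absurd h ha
    have : (∑ i ∈ Finset.range (N+1), c i * β ^ (N - i)) = β ^ N * e 0 := by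
      show _ = β ^ N * ∑ i ∈ Finset.range (N + 1), c i * oreD β γ i 0
      rw [Finset.mul_sum]
      apply Finset.sum_congr rfl
      intro i hi
      have hiN : i ≤ N := Nat.lt_succ_iff.mp (Finset.mem_range.mp hi)
      rw [oreD_zero_right]
      rw [pow_sub₀ β hβ hiN]
      rw [inv_pow]
      ring
    rw [this, he0, mul_zero]
  · -- trailing coefficient
    have h0 : e N • (δ ^ N) a = 0 := by
      have := hbasis' 0 (by omega)
      simpa using this
    have heN : e N = c N * oreD β γ N N := by
      show (∑ i ∈ Finset.range (N + 1), c i * oreD β γ i N) = c N * oreD β γ N N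
      rw [Finset.sum_eq_single N]
      · intro i hi hne
        rw [oreD_eq_zero β γ i N (by simp at hi; omega), mul_zero]
      · intro h
        exact absurd (Finset.self_mem_range_succ N) h
    rcases smul_eq_zero.mp h0 with h | h
    · exact absurd h (heN ▸ mul_ne_zero hcN (oreD_diag_ne_zero hβ hγ N))
    · exact h
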